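/- arXiv:2205.15080 — 2 statements merged into one kernel-verified Lean document; each statement's English description precedes it below -/
import Mathlib

section
/- For every integer p ≥ 3, every N ≥ p and every β > 0, the first moment of 𝒵_N(β) is given exactly by E[𝒵_N(β)] = exp( C(N,p)·( β²a_N²/(2(1+β²a_N²)) − (1/2)·ln(1+β²a_N²) ) ). Consequently, E[𝒵_N(β)] = 1 − (β⁴/4)·N·a_N² + (β⁸/32)·N²·a_N⁴ + O(N^{3−2p}) as N → ∞, i.e. there is a constant K = K(β,p) with |E[𝒵_N(β)] − 1 + (β⁴/4)Na_N² − (β⁸/32)N²a_N⁴| ≤ K·N^{3−2p} for all N. -/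
open MeasureTheory ProbabilityTheory Filter Topology

noncomputable section

namespace PSpinSK

/-- `I_N`: the p-subsets of `{0,…,N-1}`, encoding strictly increasing p-tuples. -/
def indexSet (N p : ℕ) : Finset (Finset ℕ) := Finset.powersetCard p (Finset.range N)

/-- `σ_A = ∏_{i∈A} σ_i`, where the configuration `σ ∈ {−1,1}^N` is encoded by the set
`s ⊆ {0,…,N-1}` of sites where `σ_i = +1`. -/
def sigmaA (s A : Finset ℕ) : ℝ := ∏ i ∈ A, (if i ∈ s then (1 : ℝ) else -1)

/-- Uniform average `E_σ` over `σ ∈ {−1,1}^N`. -/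
def Esigma (N : ℕ) (f : Finset ℕ → ℝ) : ℝ :=
  (2 ^ N : ℝ)⁻¹ * ∑ s ∈ Finset.powerset (Finset.range N), f s

/-- `a_N = √N · C(N,p)^{-1/2}`. -/
def aN (N p : ℕ) : ℝ := Real.sqrt N / Real.sqrt (N.choose p)

/-- The Hamiltonian `H_N(σ) = −a_N Σ_{A∈I_N} J_A σ_A`. -/
def Ham (N p : ℕ) (J : Finset ℕ → ℝ) (s : Finset ℕ) : ℝ :=
  -(aN N p) * ∑ A ∈ indexSet N p, J A * sigmaA s A

/-- The partition function `Z_N(β)`. -/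
def Zfun (N p : ℕ) (β : ℝ) (J : Finset ℕ → ℝ) : ℝ :=
  Esigma N (fun s => Real.exp (-β * Ham N p J s))

/-- The free energy `F_N(β)`. -/
def freeEnergy (N p : ℕ) (β : ℝ) (J : Finset ℕ → ℝ) : ℝ :=
  (N : ℝ)⁻¹ * Real.log (Zfun N p β J)

/-- `J_N(β) = β²/(2 C(N,p)) Σ_A J_A²`. -/
def Jterm (N p : ℕ) (β : ℝ) (J : Finset ℕ → ℝ) : ℝ :=
  β ^ 2 / (2 * (N.choose p : ℝ)) * ∑ A ∈ indexSet N p, (J A) ^ 2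

/-- `𝒵_N(β) = Z_N(β) e^{−N J_N(β)}`. -/
def calZ (N p : ℕ) (β : ℝ) (J : Finset ℕ → ℝ) : ℝ :=
  Zfun N p β J * Real.exp (-(N : ℝ) * Jterm N p β J)

/-- Truncated partition function `Z_ε^≤`. -/
def Zle (N p : ℕ) (β ε : ℝ) (J : Finset ℕ → ℝ) : ℝ :=
  Esigma N (fun s => Real.exp (-β * Ham N p J s) *
      (if -Ham N p J s ≤ (1 + ε) * β * N then 1 else 0)) *
    Real.exp (-(N : ℝ) * Jterm N p β J)

/-- Truncated partition function `Z_ε^>`. -/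
def Zgt (N p : ℕ) (β ε : ℝ) (J : Finset ℕ → ℝ) : ℝ :=
  Esigma N (fun s => Real.exp (-β * Ham N p J s) *
      (if (1 + ε) * β * N < -Ham N p J s then 1 else 0)) *
    Real.exp (-(N : ℝ) * Jterm N p β J)

def phi (m : ℝ) : ℝ :=
  (1 - m) / 2 * Real.log (1 - m) + (1 + m) / 2 * Real.log (1 + m)

/-- `β_p = (inf_{0<m<1} (1+m^{−p}) φ(m))^{1/2}`. -/
def betaP (p : ℕ) : ℝ :=
  Real.sqrt (sInf ((fun m => (1 + (m ^ p)⁻¹) * phi m) '' Set.Ioo (0 : ℝ) 1))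

/-- The family `(J_A)` consists of independent standard Gaussian random variables. -/
def stdGaussians {Ω : Type*} [MeasurableSpace Ω] (P : Measure Ω)
    (J : Finset ℕ → Ω → ℝ) : Prop :=
  (∀ A, Measurable (J A)) ∧ iIndepFun J P ∧
    ∀ A, P.map (J A) = gaussianReal 0 1

/-- Convergence in distribution (weak convergence of the laws) to the limiting measure `μ`. -/
def TendstoInDistribution {Ω : Type*} [MeasurableSpace Ω] (P : Measure Ω)
    (X : ℕ → Ω → ℝ) (μ : Measure ℝ) : Prop :=
  ∀ f : BoundedContinuousFunction ℝ ℝ,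
    Tendsto (fun N => ∫ ω, f (X N ω) ∂P) atTop (𝓝 (∫ x, f x ∂μ))

/-- Convergence in probability to `0`. -/
def TendstoInProbZero {Ω : Type*} [MeasurableSpace Ω] (P : Measure Ω)
    (X : ℕ → Ω → ℝ) : Prop :=
  ∀ δ : ℝ, 0 < δ → Tendsto (fun N => P {ω | δ ≤ |X N ω|}) atTop (𝓝 0)

/-- `d_{p−2k} = (−1)^k p! / ((p−2k)! 2^k k!)`. -/
def dcoef (p k : ℕ) : ℝ :=
  (-1) ^ k * (p.factorial : ℝ) / (((p - 2 * k).factorial : ℝ) * 2 ^ k * (k.factorial : ℝ))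

end PSpinSK

namespace PSpinSK

/-- The overlap `R_N(σ,σ')`. -/
def Rov (N : ℕ) (s t : Finset ℕ) : ℝ :=
  (N : ℝ)⁻¹ * ∑ i ∈ Finset.range N,
    (if i ∈ s then (1 : ℝ) else -1) * (if i ∈ t then (1 : ℝ) else -1)

/-- Uniform average over pairs `(σ,σ')`. -/
def Esigma2 (N : ℕ) (f : Finset ℕ → Finset ℕ → ℝ) : ℝ :=
  Esigma N (fun s => Esigma N (fun t => f s t))

/-- The large-overlap contribution `B` to the second moment of `Z_ε^≤`. -/
def Bterm (N p : ℕ) (β ε : ℝ) {Ω : Type*} [MeasurableSpace Ω] (P : Measure Ω)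
    (J : Finset ℕ → Ω → ℝ) : ℝ :=
  Esigma2 N (fun s t => ∫ ω,
    (Real.exp (-β * Ham N p (fun A => J A ω) s - β * Ham N p (fun A => J A ω) t) *
        (if -Ham N p (fun A => J A ω) s ≤ (1 + ε) * β * N then 1 else 0) *
        (if -Ham N p (fun A => J A ω) t ≤ (1 + ε) * β * N then 1 else 0) *
        Real.exp (-2 * (N : ℝ) * Jterm N p β (fun A => J A ω)) *
        (if (Real.log N)⁻¹ ≤ |Rov N s t| then 1 else 0)) ∂P)

/-- The small-overlap contribution `A` to the second moment of `Z_ε^≤`. -/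
def Aterm (N p : ℕ) (β ε : ℝ) {Ω : Type*} [MeasurableSpace Ω] (P : Measure Ω)
    (J : Finset ℕ → Ω → ℝ) : ℝ :=
  Esigma2 N (fun s t => ∫ ω,
    (Real.exp (-β * Ham N p (fun A => J A ω) s - β * Ham N p (fun A => J A ω) t) *
        (if -Ham N p (fun A => J A ω) s ≤ (1 + ε) * β * N then 1 else 0) *
        (if -Ham N p (fun A => J A ω) t ≤ (1 + ε) * β * N then 1 else 0) *
        Real.exp (-2 * (N : ℝ) * Jterm N p β (fun A => J A ω)) *
        (if |Rov N s t| < (Real.log N)⁻¹ then 1 else 0)) ∂P)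

/-- `T_N(β) = 1 − β⁴ (E_σ H²)²/8 − β³ E_σ H³/6 + β⁴ E_σ H⁴/24`. -/
def Tterm (N p : ℕ) (β : ℝ) (J : Finset ℕ → ℝ) : ℝ :=
  1 - β ^ 4 * (Esigma N (fun s => (Ham N p J s) ^ 2)) ^ 2 / 8
    - β ^ 3 * Esigma N (fun s => (Ham N p J s) ^ 3) / 6
    + β ^ 4 * Esigma N (fun s => (Ham N p J s) ^ 4) / 24

/-- `ℋ₄`: sum over quadruples of pairwise distinct multi-indices. -/
def H4 (N p : ℕ) (J : Finset ℕ → ℝ) : ℝ :=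
  aN N p ^ 4 / 24 *
    ∑ A ∈ indexSet N p, ∑ B ∈ indexSet N p, ∑ C ∈ indexSet N p, ∑ D ∈ indexSet N p,
      if A ≠ B ∧ A ≠ C ∧ A ≠ D ∧ B ≠ C ∧ B ≠ D ∧ C ≠ D then
        J A * J B * J C * J D *
          Esigma N (fun s => sigmaA s A * sigmaA s B * sigmaA s C * sigmaA s D)
      else 0

/-- The limiting variance `σ(β,p)²` in the `p` even case. -/
def sigmaEven2 (β : ℝ) (p : ℕ) : ℝ :=
  β ^ 6 / 3 *
    ∫ x, (∑ k ∈ Finset.range (p / 2 + 1), dcoef p k * x ^ (p - 2 * k)) ^ 3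
      ∂(gaussianReal 0 1)

/-- The limiting variance `σ(β,p)²` in the `p` odd case. -/
def sigmaOdd2 (β : ℝ) (p : ℕ) : ℝ :=
  β ^ 8 / 12 *
      (∫ x, (∑ k ∈ Finset.range (p / 2 + 1), dcoef p k * x ^ (p - 2 * k)) ^ 4
        ∂(gaussianReal 0 1)) -
    β ^ 8 * (p.factorial : ℝ) ^ 2 / 8

/-- The scaling `α_N(p)`. -/
def alphaN (N p : ℕ) : ℝ :=
  if Even p then (N : ℝ) ^ (3 * (p : ℝ) / 4 - 3 / 2) else (N : ℝ) ^ ((p : ℝ) - 2)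

/-- The limiting mean `μ(β,p)`. -/
def muBP (β : ℝ) (p : ℕ) : ℝ :=
  if Even p then 0 else -(β ^ 4) * (p.factorial : ℝ) / 4

/-- The limiting variance `σ(β,p)²`. -/
def sigmaBP2 (β : ℝ) (p : ℕ) : ℝ :=
  if Even p then sigmaEven2 β p else sigmaOdd2 β p

end PSpinSK


open MeasureTheory ProbabilityTheory Filter Topology Real

namespace PSpinAux

/-- cubic remainder bound for `exp` on `(-∞,0]`. -/
lemma exp_cubic {x : ℝ} (hx : x ≤ 0) :
    |Real.exp x - (1 + x + x ^ 2 / 2)| ≤ 3 * |x| ^ 3 := by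
  rcases le_or_gt (-1) x with h1 | h1
  · have hx1 : |x| ≤ 1 := by rw [abs_le]; constructor <;> linarith
    have := Real.exp_bound hx1 (n := 3) (by norm_num)
    have hsum : ∑ m ∈ Finset.range 3, x ^ m / m.factorial = 1 + x + x ^ 2 / 2 := by
      norm_num [Finset.sum_range_succ, Nat.factorial]
    rw [hsum] at this
    calc |Real.exp x - (1 + x + x ^ 2 / 2)| ≤ |x| ^ 3 * (Nat.succ 3 / (Nat.factorial 3 * 3)) := this
      _ ≤ 3 * |x| ^ 3 := by
          have : (0:ℝ) ≤ |x| ^ 3 := by positivity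
          norm_num [Nat.factorial]
          nlinarith
  · have habs : |x| = -x := abs_of_nonpos hx
    rw [habs, abs_le]
    have he1 : Real.exp x ≤ 1 := Real.exp_le_one_iff.mpr hx
    have he0 : 0 < Real.exp x := Real.exp_pos x
    constructor <;> nlinarith [sq_nonneg x, sq_nonneg (x + 1), sq_nonneg (x*x)]

lemma g_nonpos {u : ℝ} (hu : 0 ≤ u) :
    u / (2 * (1 + u)) - Real.log (1 + u) / 2 ≤ 0 := by
  have h1u : (0:ℝ) < 1 + u := by linarith
  have h := Real.log_le_sub_one_of_pos (x := (1 + u)⁻¹) (by positivity)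
  rw [Real.log_inv] at h
  have h2 : -Real.log (1 + u) ≤ (1 + u)⁻¹ - 1 := h
  have h3 : u / (2 * (1 + u)) + ((1 + u)⁻¹ - 1) / 2 = 0 := by field_simp; ring
  linarith [h2, h3]

lemma log_taylor {u : ℝ} (hu : 0 ≤ u) :
    |u / (2 * (1 + u)) - Real.log (1 + u) / 2 + u ^ 2 / 4| ≤ 3 * u ^ 3 := by
  have h1u : (0:ℝ) < 1 + u := by linarith
  rcases le_or_gt u (1/2) with hu2 | hu2
  · have hx : |(-u : ℝ)| < 1 := by rw [abs_neg, abs_of_nonneg hu]; linarith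
    have h := Real.abs_log_sub_add_sum_range_le hx 2
    rw [abs_neg, abs_of_nonneg hu] at h
    have hsum : ∑ i ∈ Finset.range 2, (-u) ^ (i + 1) / (i + 1) = -u + u ^ 2 / 2 := by
      simp [Finset.sum_range_succ]
      ring
    rw [hsum, sub_neg_eq_add] at h
    -- h : |(-u + u^2/2) + log (1+u)| ≤ u^3 / (1-u)
    set r : ℝ := Real.log (1 + u) - u + u ^ 2 / 2 with hr
    have hrb : |r| ≤ 2 * u ^ 3 := by
      have h2 : |r| ≤ u ^ 3 / (1 - u) := by
        have heq : -u + u ^ 2 / 2 + Real.log (1 + u) = r := by rw [hr]; ring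
        rw [heq] at h
        calc |r| ≤ u ^ (2+1) / (1 - u) := h
          _ = u ^ 3 / (1 - u) := by norm_num
      have h3 : u ^ 3 / (1 - u) ≤ 2 * u ^ 3 := by
        rw [div_le_iff₀ (by linarith)]
        nlinarith [pow_nonneg hu 3]
      linarith
    have hid : u / (2 * (1 + u)) - Real.log (1 + u) / 2 + u ^ 2 / 4
        = u ^ 3 / (2 * (1 + u)) - r / 2 := by
      rw [hr]; field_simp; ring
    rw [hid]
    have hb1 : u ^ 3 / (2 * (1 + u)) ≤ u ^ 3 / 2 := by
      apply div_le_div_of_nonneg_left (by positivity) (by norm_num) (by linarith)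
    have hb0 : 0 ≤ u ^ 3 / (2 * (1 + u)) := by positivity
    calc |u ^ 3 / (2 * (1 + u)) - r / 2| ≤ |u ^ 3 / (2 * (1 + u))| + |r / 2| := abs_sub _ _
      _ ≤ u ^ 3 / 2 + u ^ 3 := by
          rw [abs_of_nonneg hb0, abs_div]
          simp only [abs_two]
          linarith
      _ ≤ 3 * u ^ 3 := by nlinarith [pow_nonneg hu 3]
  · have hlog1 : Real.log (1 + u) ≤ u := by
      have := Real.log_le_sub_one_of_pos h1u; linarith
    have hlog0 : 0 ≤ Real.log (1 + u) := Real.log_nonneg (by linarith)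
    have ht1 : 0 ≤ u / (2 * (1 + u)) := by positivity
    have ht2 : u / (2 * (1 + u)) ≤ u / 2 := by
      apply div_le_div_of_nonneg_left hu (by norm_num) (by linarith)
    have p1 : 3 * u ^ 3 ≥ (3/2) * u ^ 2 := by
      nlinarith [mul_nonneg (sq_nonneg u) (by linarith : (0:ℝ) ≤ u - 1/2)]
    have p2 : u ^ 2 ≥ u / 2 := by
      nlinarith [mul_nonneg hu (by linarith : (0:ℝ) ≤ u - 1/2)]
    rw [abs_le]
    constructor <;> linarith

end PSpinAux


open MeasureTheory ProbabilityTheory Filter Topology Real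
open scoped NNReal ENNReal

namespace PSpinAux

lemma integral_gaussianReal_density (f : ℝ → ℝ) :
    ∫ x, f x ∂(gaussianReal 0 1) = ∫ x, gaussianPDFReal 0 1 x * f x := by
  rw [gaussianReal_of_var_ne_zero _ one_ne_zero]
  have : gaussianPDF 0 1 = fun x => ((Real.toNNReal (gaussianPDFReal 0 1 x) : ℝ≥0) : ℝ≥0∞) := by
    funext x; rfl
  rw [this, integral_withDensity_eq_integral_smul
    ((measurable_gaussianPDFReal 0 1).real_toNNReal) f]
  congr 1
  funext x
  simp only [NNReal.smul_def, smul_eq_mul]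
  rw [Real.coe_toNNReal _ (gaussianPDFReal_nonneg 0 1 x)]

/-- Completed-square Gaussian integral. -/
lemma gauss_integral (t c : ℝ) (hc : 0 < c) :
    ∫ x, Real.exp (t * x - c * x ^ 2) ∂(gaussianReal 0 1)
      = Real.exp (t ^ 2 / (2 * (1 + 2 * c)) - Real.log (1 + 2 * c) / 2) := by
  have hb : (0:ℝ) < 1 + 2 * c := by linarith
  set b : ℝ := 1 + 2 * c with hbdef
  set v : ℝ≥0 := ⟨b⁻¹, by positivity⟩ with hvdef
  have hv0 : v ≠ 0 := by
    have : (0:ℝ) < (v:ℝ) := by rw [hvdef]; exact inv_pos.mpr hb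
    exact fun h => by simp [h] at this
  have hvr : (v : ℝ) = b⁻¹ := rfl
  have key : ∀ x : ℝ, gaussianPDFReal 0 1 x * Real.exp (t * x - c * x ^ 2)
      = Real.exp (t ^ 2 / (2 * b) - Real.log b / 2) * gaussianPDFReal (t / b) v x := by
    intro x
    simp only [gaussianPDFReal, hvr]
    have hsqrt : Real.sqrt (2 * π * b⁻¹) = Real.sqrt (2 * π) * Real.sqrt b⁻¹ :=
      Real.sqrt_mul (by positivity) _
    have hsb : Real.sqrt b⁻¹ = (Real.sqrt b)⁻¹ := Real.sqrt_inv b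
    have hsbpos : 0 < Real.sqrt b := Real.sqrt_pos.mpr hb
    have hexpb : Real.sqrt b = Real.exp (Real.log b / 2) := by
      rw [← Real.log_sqrt hb.le, Real.exp_log hsbpos]
    rw [hsqrt, hsb]
    rw [mul_inv, inv_inv]
    have h2pi : (0:ℝ) < Real.sqrt (2 * π) := Real.sqrt_pos.mpr (by positivity)
    rw [NNReal.coe_one] at *
    field_simp
    rw [hexpb, ← Real.exp_add, ← Real.exp_add, ← Real.exp_add, Real.exp_eq_exp]
    field_simp
    ring
  calc ∫ x, Real.exp (t * x - c * x ^ 2) ∂(gaussianReal 0 1)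
      = ∫ x, gaussianPDFReal 0 1 x * Real.exp (t * x - c * x ^ 2) :=
        integral_gaussianReal_density _
    _ = ∫ x, Real.exp (t ^ 2 / (2 * b) - Real.log b / 2) * gaussianPDFReal (t / b) v x := by
        simp only [key]
    _ = Real.exp (t ^ 2 / (2 * b) - Real.log b / 2) * ∫ x, gaussianPDFReal (t / b) v x := by
        rw [integral_const_mul]
    _ = Real.exp (t ^ 2 / (2 * b) - Real.log b / 2) := by
        rw [integral_gaussianPDFReal_eq_one _ hv0, mul_one]

end PSpinAux


open MeasureTheory ProbabilityTheory Filter Topology Real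

namespace PSpinAux

lemma integral_indep_prod {ι Ω : Type*} [MeasurableSpace Ω] (P : Measure Ω)
    [IsProbabilityMeasure P] (f : ι → Ω → ℝ)
    (hind : iIndepFun f P) (hm : ∀ i, Measurable (f i))
    (s : Finset ι) :
    ∫ ω, ∏ i ∈ s, f i ω ∂P = ∏ i ∈ s, ∫ ω, f i ω ∂P := by
  classical
  induction s using Finset.induction_on with
  | empty => simp
  | insert _ _ ha ih =>
    rename_i a s'
    simp only [Finset.prod_insert ha]
    have hXY : IndepFun (f a) (∏ j ∈ s', f j) P :=
      (hind.indepFun_finsetProd_of_notMem hm ha).symm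
    have hmp : AEStronglyMeasurable (∏ j ∈ s', f j) P := by
      have h1 : (∏ j ∈ s', f j) = fun ω => ∏ j ∈ s', f j ω :=
        funext fun ω => Finset.prod_apply ω s' f
      rw [h1]
      exact (Finset.measurable_prod s' (fun i (_ : i ∈ s') => hm i)).aestronglyMeasurable
    have hint : ∫ ω, (f a * ∏ j ∈ s', f j) ω ∂P
        = (∫ ω, f a ω ∂P) * ∫ ω, (∏ j ∈ s', f j) ω ∂P :=
      hXY.integral_mul_eq_mul_integral (hm a).aestronglyMeasurable hmp
    simp only [Pi.mul_apply, Finset.prod_apply] at hint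
    rw [← ih]
    exact hint

end PSpinAux

namespace PSpinAux

open PSpinSK MeasureTheory ProbabilityTheory

lemma sigmaA_sq (s A : Finset ℕ) : sigmaA s A ^ 2 = 1 := by
  rw [sigmaA, ← Finset.prod_pow]
  apply Finset.prod_eq_one
  intro i _
  split_ifs <;> norm_num

lemma aN_sq {N p : ℕ} (h : p ≤ N) : aN N p ^ 2 = (N : ℝ) / (N.choose p : ℝ) := by
  rw [aN, div_pow, Real.sq_sqrt (Nat.cast_nonneg N), Real.sq_sqrt (Nat.cast_nonneg _)]

lemma card_indexSet (N p : ℕ) : (indexSet N p).card = N.choose p := by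
  rw [indexSet, Finset.card_powersetCard, Finset.card_range]

lemma firstMoment {Ω : Type*} [MeasurableSpace Ω] (P : Measure Ω)
    [IsProbabilityMeasure P] (J : Finset ℕ → Ω → ℝ) (hJ : stdGaussians P J)
    (p N : ℕ) (hp : 3 ≤ p) (hN : p ≤ N) (β : ℝ) (hβ0 : 0 < β) :
    ∫ ω, calZ N p β (fun A => J A ω) ∂P =
      Real.exp ((N.choose p : ℝ) *
        (β ^ 2 * aN N p ^ 2 / (2 * (1 + β ^ 2 * aN N p ^ 2)) -
          Real.log (1 + β ^ 2 * aN N p ^ 2) / 2)) := by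
  classical
  obtain ⟨hmeas, hind, hmap⟩ := hJ
  set a := aN N p with ha
  have hC : (0:ℝ) < (N.choose p : ℝ) := by exact_mod_cast Nat.choose_pos hN
  have hN0 : (0:ℝ) < (N:ℝ) := by
    have : 0 < N := lt_of_lt_of_le (by omega) hN
    exact_mod_cast this
  have ha2 : a ^ 2 = (N:ℝ) / (N.choose p : ℝ) := aN_sq hN
  set c : ℝ := β ^ 2 * a ^ 2 / 2 with hcdef
  have hc : 0 < c := by rw [hcdef, ha2]; positivity
  set G : ℝ := Real.exp (β^2*a^2/(2*(1+β^2*a^2)) - Real.log (1+β^2*a^2)/2) with hG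
  have hφm : ∀ t : ℝ, Measurable (fun x : ℝ => Real.exp (t * x - c * x ^ 2)) := by
    intro t; fun_prop
  have hfm : ∀ (s A : Finset ℕ),
      Measurable (fun ω => Real.exp (β * a * sigmaA s A * J A ω - c * (J A ω) ^ 2)) := by
    intro s A
    exact (hφm (β * a * sigmaA s A)).comp (hmeas A)
  have hexp_le : ∀ (s A : Finset ℕ) (ω : Ω),
      Real.exp (β * a * sigmaA s A * J A ω - c * (J A ω) ^ 2)
        ≤ Real.exp (β^2*a^2/(4*c)) := by
    intro s A ω
    apply Real.exp_le_exp.mpr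
    set x := J A ω
    set t := β * a * sigmaA s A with htdef
    have ht2 : t ^ 2 = β^2*a^2 := by
      rw [htdef, mul_pow, mul_pow, sigmaA_sq, mul_one]
    rw [← ht2, ← sub_nonneg]
    have h4c : (0:ℝ) < 4*c := by positivity
    have key : 0 ≤ (2*c*x - t)^2 / (4*c) := by positivity
    have hexpand : (2*c*x - t)^2 / (4*c) = t ^ 2 / (4 * c) - (t * x - c * x ^ 2) := by
      field_simp
      ring
    linarith [hexpand ▸ key]
  have hcal : ∀ ω : Ω, calZ N p β (fun A => J A ω)
      = (2 ^ N : ℝ)⁻¹ * ∑ s ∈ Finset.powerset (Finset.range N),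
          ∏ A ∈ indexSet N p,
            Real.exp (β * a * sigmaA s A * J A ω - c * (J A ω) ^ 2) := by
    intro ω
    rw [calZ, Zfun, Esigma, mul_assoc, Finset.sum_mul]
    congr 1
    apply Finset.sum_congr rfl
    intro s _
    rw [← Real.exp_add, ← Real.exp_sum]
    congr 1
    have hk : (N:ℝ) * (β^2 / (2 * (N.choose p : ℝ))) = c := by
      rw [hcdef, ha2]; field_simp
    have h1 : ∑ A ∈ indexSet N p, (β * a * sigmaA s A * J A ω)
        = β * a * ∑ A ∈ indexSet N p, J A ω * sigmaA s A := by
      rw [Finset.mul_sum]; exact Finset.sum_congr rfl (fun A _ => by ring)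
    have h2 : ∑ A ∈ indexSet N p, (c * (J A ω)^2)
        = (N:ℝ) * (β^2/(2*(N.choose p : ℝ))) * ∑ A ∈ indexSet N p, (J A ω)^2 := by
      rw [hk, Finset.mul_sum]
    rw [Finset.sum_sub_distrib, h1, h2, Ham, Jterm]
    ring
  have hintg : ∀ s : Finset ℕ, Integrable (fun ω =>
      ∏ A ∈ indexSet N p, Real.exp (β * a * sigmaA s A * J A ω - c * (J A ω) ^ 2)) P := by
    intro s
    apply Integrable.mono' (integrable_const (Real.exp (β^2*a^2/(4*c)) ^ (N.choose p)))
    · exact (Finset.measurable_prod _ (fun A _ => hfm s A)).aestronglyMeasurable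
    · apply ae_of_all
      intro ω
      rw [Real.norm_eq_abs, abs_of_nonneg (Finset.prod_nonneg (fun A _ => (Real.exp_pos _).le))]
      calc ∏ A ∈ indexSet N p, Real.exp (β * a * sigmaA s A * J A ω - c * (J A ω) ^ 2)
          ≤ ∏ _A ∈ indexSet N p, Real.exp (β^2*a^2/(4*c)) :=
            Finset.prod_le_prod (fun A _ => (Real.exp_pos _).le) (fun A _ => hexp_le s A ω)
        _ = Real.exp (β^2*a^2/(4*c)) ^ (N.choose p) := by
            rw [Finset.prod_const, card_indexSet]
  have hone : ∀ s ∈ Finset.powerset (Finset.range N),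
      ∫ ω, ∏ A ∈ indexSet N p,
          Real.exp (β * a * sigmaA s A * J A ω - c * (J A ω) ^ 2) ∂P
        = G ^ (N.choose p) := by
    intro s _
    have hprod := integral_indep_prod P
      (fun A ω => Real.exp (β * a * sigmaA s A * J A ω - c * (J A ω) ^ 2))
      (hind.comp (fun A => fun x => Real.exp (β * a * sigmaA s A * x - c * x ^ 2))
        (fun A => hφm _))
      (fun A => hfm s A) (indexSet N p)
    rw [hprod]
    have hsingle : ∀ A : Finset ℕ,
        ∫ ω, Real.exp (β * a * sigmaA s A * J A ω - c * (J A ω) ^ 2) ∂P = G := by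
      intro A
      have h1 : ∫ ω, Real.exp (β * a * sigmaA s A * J A ω - c * (J A ω) ^ 2) ∂P
          = ∫ x, Real.exp (β * a * sigmaA s A * x - c * x ^ 2) ∂(P.map (J A)) :=
        (integral_map (hmeas A).aemeasurable (hφm _).aestronglyMeasurable).symm
      rw [h1, hmap A, gauss_integral _ _ hc, hG]
      have ht2 : (β * a * sigmaA s A) ^ 2 = β^2*a^2 := by
        rw [mul_pow, mul_pow, sigmaA_sq, mul_one]
      have h12c : 1 + 2 * c = 1 + β^2*a^2 := by rw [hcdef]; ring
      rw [ht2, h12c]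
    calc ∏ A ∈ indexSet N p, ∫ ω, Real.exp (β * a * sigmaA s A * J A ω - c * (J A ω) ^ 2) ∂P
        = ∏ _A ∈ indexSet N p, G := Finset.prod_congr rfl (fun A _ => hsingle A)
      _ = G ^ (N.choose p) := by rw [Finset.prod_const, card_indexSet]
  simp only [hcal]
  rw [integral_const_mul, integral_finset_sum _ (fun s _ => hintg s),
    Finset.sum_congr rfl hone, Finset.sum_const, Finset.card_powerset, Finset.card_range,
    nsmul_eq_mul]
  have h2N : ((2:ℝ) ^ N)⁻¹ * ((2 ^ N : ℕ) * G ^ (N.choose p)) = G ^ (N.choose p) := by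
    push_cast
    field_simp
  rw [h2N, hG, ← Real.exp_nat_mul]

end PSpinAux

namespace PSpinAux

open MeasureTheory ProbabilityTheory

lemma assemble (β n c q D u : ℝ) (hβ : 0 < β) (hn : 1 ≤ n) (hc : 0 < c) (hD : 1 ≤ D)
    (hq3 : n ^ 3 ≤ q) (hqD : q ≤ D * c) (hu_eq : u = β ^ 2 * n / c) :
    |Real.exp (c * (u / (2 * (1 + u)) - Real.log (1 + u) / 2)) - 1 + c * u ^ 2 / 4
        - c ^ 2 * u ^ 4 / 32|
      ≤ (3 * (1/4 + 3 * (β ^ 2 * D)) ^ 3 * β ^ 12 * D ^ 3 + 3 * β ^ 6 * D ^ 2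
          + (3/2) * (1/4 + 3 * (β ^ 2 * D) + 1/4) * β ^ 10 * D ^ 3) * (n ^ 3 / q ^ 2) := by
  have hn0 : (0:ℝ) < n := by linarith
  have hq0 : (0:ℝ) < q := lt_of_lt_of_le (by positivity) hq3
  have hu : 0 < u := by rw [hu_eq]; positivity
  have hn3 : n ≤ n ^ 3 := by
    calc n = n ^ 1 := (pow_one n).symm
      _ ≤ n ^ 3 := pow_le_pow_right₀ hn (by norm_num)
  have hnq : n ≤ q := le_trans hn3 hq3
  have hU : u ≤ β ^ 2 * D := by
    rw [hu_eq, div_le_iff₀ hc]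
    have hn_le : n ≤ D * c := le_trans hnq hqD
    nlinarith [sq_nonneg β]
  set c1 : ℝ := 1/4 + 3 * (β ^ 2 * D) with hc1_def
  have hc1 : (0:ℝ) < c1 := by rw [hc1_def]; positivity
  set g : ℝ := u / (2 * (1 + u)) - Real.log (1 + u) / 2 with hg_def
  set x : ℝ := c * g with hx_def
  set m : ℝ := -(c * u ^ 2 / 4) with hm_def
  have hgle : |g + u ^ 2 / 4| ≤ 3 * u ^ 3 := log_taylor hu.le
  have hgne : g ≤ 0 := g_nonpos hu.le
  have hx0 : x ≤ 0 := by rw [hx_def]; simpa using mul_le_mul_of_nonneg_left hgne hc.le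
  have hec : |Real.exp x - (1 + x + x ^ 2 / 2)| ≤ 3 * |x| ^ 3 := exp_cubic hx0
  have hxm : |x - m| ≤ 3 * c * u ^ 3 := by
    have h1 : x - m = c * (g + u ^ 2 / 4) := by rw [hx_def, hm_def]; ring
    rw [h1, abs_mul, abs_of_nonneg hc.le]
    calc c * |g + u ^ 2 / 4| ≤ c * (3 * u ^ 3) := by
          exact mul_le_mul_of_nonneg_left hgle hc.le
      _ = 3 * c * u ^ 3 := by ring
  have hmabs : |m| = c * u ^ 2 / 4 := by
    rw [hm_def, abs_neg, abs_of_nonneg (by positivity)]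
  have hxb : |x| ≤ c1 * (c * u ^ 2) := by
    calc |x| = |(x - m) + m| := by rw [sub_add_cancel]
      _ ≤ |x - m| + |m| := abs_add_le _ _
      _ ≤ 3 * c * u ^ 3 + c * u ^ 2 / 4 := by rw [hmabs]; linarith
      _ ≤ c1 * (c * u ^ 2) := by
          rw [hc1_def]
          nlinarith [mul_nonneg (mul_nonneg hc.le (sq_nonneg u)) (sub_nonneg.mpr hU)]
  have key : |Real.exp x - (1 + m + m ^ 2 / 2)|
      ≤ 3 * |x| ^ 3 + |x - m| + |x - m| * (|x| + |m|) / 2 := by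
    have hsplit : Real.exp x - (1 + m + m ^ 2 / 2)
        = (Real.exp x - (1 + x + x ^ 2 / 2)) + (x - m) + (x ^ 2 - m ^ 2) / 2 := by ring
    have habs2 : |x ^ 2 - m ^ 2| ≤ |x - m| * (|x| + |m|) := by
      have : x ^ 2 - m ^ 2 = (x - m) * (x + m) := by ring
      rw [this, abs_mul]
      exact mul_le_mul_of_nonneg_left ((abs_add_le x m)) (abs_nonneg _)
    calc |Real.exp x - (1 + m + m ^ 2 / 2)|
        = |(Real.exp x - (1 + x + x ^ 2 / 2)) + (x - m) + (x ^ 2 - m ^ 2) / 2| := by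
          rw [hsplit]
      _ ≤ |(Real.exp x - (1 + x + x ^ 2 / 2)) + (x - m)| + |(x ^ 2 - m ^ 2) / 2| :=
          abs_add_le _ _
      _ ≤ |Real.exp x - (1 + x + x ^ 2 / 2)| + |x - m| + |x ^ 2 - m ^ 2| / 2 := by
          rw [abs_div, abs_two]
          linarith [abs_add_le (Real.exp x - (1 + x + x ^ 2 / 2)) (x - m)]
      _ ≤ 3 * |x| ^ 3 + |x - m| + |x - m| * (|x| + |m|) / 2 := by linarith
  -- monomial bounds
  have hqDc2 : q ^ 2 ≤ (D * c) ^ 2 := pow_le_pow_left₀ hq0.le hqD 2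
  have hqDc3 : q ^ 3 ≤ (D * c) ^ 3 := pow_le_pow_left₀ hq0.le hqD 3
  have e1 : c * u ^ 3 = β ^ 6 * (n ^ 3 / c ^ 2) := by
    rw [hu_eq]; field_simp
  have e2 : c ^ 2 * u ^ 5 = β ^ 10 * (n ^ 5 / c ^ 3) := by
    rw [hu_eq]; field_simp
  have e3 : c ^ 3 * u ^ 6 = β ^ 12 * (n ^ 6 / c ^ 3) := by
    rw [hu_eq]; field_simp
  have hn25 : n ^ 2 ≤ q := by
    have : n ^ 2 ≤ n ^ 3 := pow_le_pow_right₀ hn (by norm_num)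
    linarith
  have f1 : n ^ 3 / c ^ 2 ≤ D ^ 2 * (n ^ 3 / q ^ 2) := by
    have h : n ^ 3 * q ^ 2 ≤ (D ^ 2 * n ^ 3) * c ^ 2 := by
      calc n ^ 3 * q ^ 2 ≤ n ^ 3 * (D * c) ^ 2 :=
            mul_le_mul_of_nonneg_left hqDc2 (by positivity)
        _ = (D ^ 2 * n ^ 3) * c ^ 2 := by ring
    calc n ^ 3 / c ^ 2 ≤ (D ^ 2 * n ^ 3) / q ^ 2 :=
          (div_le_div_iff₀ (by positivity) (by positivity)).mpr h
      _ = D ^ 2 * (n ^ 3 / q ^ 2) := by ring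
  have f2 : n ^ 5 / c ^ 3 ≤ D ^ 3 * (n ^ 3 / q ^ 2) := by
    have h : n ^ 5 * q ^ 2 ≤ (D ^ 3 * n ^ 3) * c ^ 3 := by
      calc n ^ 5 * q ^ 2 = n ^ 3 * (n ^ 2 * q ^ 2) := by ring
        _ ≤ n ^ 3 * (q * q ^ 2) :=
            mul_le_mul_of_nonneg_left
              (mul_le_mul_of_nonneg_right hn25 (by positivity)) (by positivity)
        _ = n ^ 3 * q ^ 3 := by ring
        _ ≤ n ^ 3 * (D * c) ^ 3 := mul_le_mul_of_nonneg_left hqDc3 (by positivity)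
        _ = (D ^ 3 * n ^ 3) * c ^ 3 := by ring
    calc n ^ 5 / c ^ 3 ≤ (D ^ 3 * n ^ 3) / q ^ 2 :=
          (div_le_div_iff₀ (by positivity) (by positivity)).mpr h
      _ = D ^ 3 * (n ^ 3 / q ^ 2) := by ring
  have f3 : n ^ 6 / c ^ 3 ≤ D ^ 3 * (n ^ 3 / q ^ 2) := by
    have h : n ^ 6 * q ^ 2 ≤ (D ^ 3 * n ^ 3) * c ^ 3 := by
      calc n ^ 6 * q ^ 2 = n ^ 3 * (n ^ 3 * q ^ 2) := by ring
        _ ≤ n ^ 3 * (q * q ^ 2) :=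
            mul_le_mul_of_nonneg_left
              (mul_le_mul_of_nonneg_right hq3 (by positivity)) (by positivity)
        _ = n ^ 3 * q ^ 3 := by ring
        _ ≤ n ^ 3 * (D * c) ^ 3 := mul_le_mul_of_nonneg_left hqDc3 (by positivity)
        _ = (D ^ 3 * n ^ 3) * c ^ 3 := by ring
    calc n ^ 6 / c ^ 3 ≤ (D ^ 3 * n ^ 3) / q ^ 2 :=
          (div_le_div_iff₀ (by positivity) (by positivity)).mpr h
      _ = D ^ 3 * (n ^ 3 / q ^ 2) := by ring
  have hE0 : (0:ℝ) ≤ n ^ 3 / q ^ 2 := by positivity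
  have hgoal_eq : Real.exp x - 1 + c * u ^ 2 / 4 - c ^ 2 * u ^ 4 / 32
      = Real.exp x - (1 + m + m ^ 2 / 2) := by
    rw [hm_def]; ring
  clear_value c1 g x m
  rw [hgoal_eq]
  calc |Real.exp x - (1 + m + m ^ 2 / 2)|
      ≤ 3 * |x| ^ 3 + |x - m| + |x - m| * (|x| + |m|) / 2 := key
    _ ≤ 3 * (c1 * (c * u ^ 2)) ^ 3 + 3 * c * u ^ 3
        + (3 * c * u ^ 3) * (c1 * (c * u ^ 2) + c * u ^ 2 / 4) / 2 := by
        have t1 : |x| ^ 3 ≤ (c1 * (c * u ^ 2)) ^ 3 := pow_le_pow_left₀ (abs_nonneg x) hxb 3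
        have t3 : |x - m| * (|x| + |m|) ≤ (3 * c * u ^ 3) * (c1 * (c * u ^ 2) + c * u ^ 2 / 4) :=
          mul_le_mul hxm (by rw [hmabs]; linarith [hxb]) (by positivity) (by positivity)
        linarith
    _ = 3 * c1 ^ 3 * (c ^ 3 * u ^ 6) + 3 * (c * u ^ 3)
        + (3/2) * (c1 + 1/4) * (c ^ 2 * u ^ 5) := by ring
    _ = 3 * c1 ^ 3 * (β ^ 12 * (n ^ 6 / c ^ 3)) + 3 * (β ^ 6 * (n ^ 3 / c ^ 2))
        + (3/2) * (c1 + 1/4) * (β ^ 10 * (n ^ 5 / c ^ 3)) := by rw [e1, e2, e3]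
    _ ≤ 3 * c1 ^ 3 * (β ^ 12 * (D ^ 3 * (n ^ 3 / q ^ 2)))
        + 3 * (β ^ 6 * (D ^ 2 * (n ^ 3 / q ^ 2)))
        + (3/2) * (c1 + 1/4) * (β ^ 10 * (D ^ 3 * (n ^ 3 / q ^ 2))) := by
        gcongr
    _ = (3 * c1 ^ 3 * β ^ 12 * D ^ 3 + 3 * β ^ 6 * D ^ 2
        + (3/2) * (c1 + 1/4) * β ^ 10 * D ^ 3) * (n ^ 3 / q ^ 2) := by ring

end PSpinAux


open PSpinSK in
/-- exact first moment of `𝒵_N(β)` and its asymptotic expansion. -/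
theorem pspin_first_moment_calZ
    {Ω : Type*} [MeasurableSpace Ω] (P : MeasureTheory.Measure Ω)
    [MeasureTheory.IsProbabilityMeasure P]
    (J : Finset ℕ → Ω → ℝ) (hJ : PSpinSK.stdGaussians P J)
    (p : ℕ) (hp : 3 ≤ p) (β : ℝ) (hβ0 : 0 < β) :
    (∀ N, p ≤ N →
      (∫ ω, calZ N p β (fun A => J A ω) ∂P) =
        Real.exp ((N.choose p : ℝ) *
          (β ^ 2 * aN N p ^ 2 / (2 * (1 + β ^ 2 * aN N p ^ 2)) -
            Real.log (1 + β ^ 2 * aN N p ^ 2) / 2))) ∧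
    ∃ K : ℝ, ∀ N, p ≤ N →
      |(∫ ω, calZ N p β (fun A => J A ω) ∂P) - 1 + β ^ 4 / 4 * N * aN N p ^ 2 -
          β ^ 8 / 32 * N ^ 2 * aN N p ^ 4| ≤ K * (N : ℝ) ^ ((3 : ℝ) - 2 * p) := by
  constructor
  · intro N hN
    exact PSpinAux.firstMoment P J hJ p N hp hN β hβ0
  · set D : ℝ := (p : ℝ) ^ p * (p.factorial : ℝ) with hD_def
    have hD : 1 ≤ D := by
      have hnat : 1 ≤ p ^ p * p.factorial :=
        Nat.one_le_iff_ne_zero.mpr (by positivity)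
      calc (1:ℝ) = ((1:ℕ):ℝ) := by norm_num
        _ ≤ ((p ^ p * p.factorial : ℕ) : ℝ) := by exact_mod_cast hnat
        _ = D := by rw [hD_def]; push_cast; ring
    refine ⟨3 * (1/4 + 3 * (β ^ 2 * D)) ^ 3 * β ^ 12 * D ^ 3 + 3 * β ^ 6 * D ^ 2
      + (3/2) * (1/4 + 3 * (β ^ 2 * D) + 1/4) * β ^ 10 * D ^ 3, ?_⟩
    intro N hN
    have hN1 : (1:ℝ) ≤ (N:ℝ) := by exact_mod_cast (show 1 ≤ N by omega)
    have hN0 : (0:ℝ) < (N:ℝ) := by linarith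
    have hC : (0:ℝ) < (N.choose p : ℝ) := by exact_mod_cast Nat.choose_pos hN
    have ha2 : aN N p ^ 2 = (N:ℝ) / (N.choose p : ℝ) := PSpinAux.aN_sq hN
    rw [PSpinAux.firstMoment P J hJ p N hp hN β hβ0]
    set n : ℝ := (N:ℝ) with hn_def
    set cc : ℝ := (N.choose p : ℝ) with hcc_def
    set u : ℝ := β ^ 2 * n / cc with hu_def
    have hba : β ^ 2 * aN N p ^ 2 = u := by rw [ha2, hu_def]; ring
    have h3 : β ^ 4 / 4 * n * aN N p ^ 2 = cc * u ^ 2 / 4 := by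
      rw [ha2, hu_def]; field_simp
    have h4 : β ^ 8 / 32 * n ^ 2 * aN N p ^ 4 = cc ^ 2 * u ^ 4 / 32 := by
      have h44 : aN N p ^ 4 = (aN N p ^ 2) ^ 2 := by ring
      rw [h44, ha2, hu_def]; field_simp
    have hq3 : n ^ 3 ≤ n ^ p := pow_le_pow_right₀ hN1 hp
    have hqD : n ^ p ≤ D * cc := by
      have hNc : ((N + 1 - p : ℕ) : ℝ) = n + 1 - (p:ℝ) := by
        have h := Nat.cast_sub (show p ≤ N + 1 by omega) (R := ℝ)
        rw [h]; push_cast; ring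
      have hp3 : (3:ℝ) ≤ (p:ℝ) := by exact_mod_cast hp
      have hpN : (p:ℝ) ≤ n := by rw [hn_def]; exact_mod_cast hN
      have hlin : n ≤ (p:ℝ) * (n + 1 - (p:ℝ)) := by nlinarith
      have hfact : (0:ℝ) < (p.factorial : ℝ) := by
        exact_mod_cast p.factorial_pos
      have hb : ((N + 1 - p : ℕ) : ℝ) ^ p ≤ (p.factorial : ℝ) * cc := by
        have hpc := Nat.pow_le_choose p N (α := ℝ)
        rw [div_le_iff₀ hfact] at hpc
        calc ((N + 1 - p : ℕ) : ℝ) ^ p ≤ (N.choose p : ℝ) * (p.factorial : ℝ) := hpc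
          _ = (p.factorial : ℝ) * cc := by rw [hcc_def]; ring
      calc n ^ p ≤ ((p:ℝ) * (n + 1 - (p:ℝ))) ^ p :=
            pow_le_pow_left₀ (by linarith) hlin p
        _ = (p:ℝ) ^ p * (n + 1 - (p:ℝ)) ^ p := mul_pow _ _ _
        _ = (p:ℝ) ^ p * ((N + 1 - p : ℕ) : ℝ) ^ p := by
            rw [hNc]
        _ ≤ (p:ℝ) ^ p * ((p.factorial : ℝ) * cc) := by
            exact mul_le_mul_of_nonneg_left hb (by positivity)
        _ = D * cc := by rw [hD_def]; ring
    have hr : n ^ ((3:ℝ) - 2 * (p:ℝ)) = n ^ 3 / (n ^ p) ^ 2 := by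
      rw [show ((3:ℝ) - 2 * (p:ℝ)) = ((3:ℕ):ℝ) - ((2 * p : ℕ):ℝ) by push_cast; ring,
        Real.rpow_sub hN0, Real.rpow_natCast, Real.rpow_natCast, mul_comm 2 p, pow_mul]
    calc |Real.exp (cc * (β ^ 2 * aN N p ^ 2 / (2 * (1 + β ^ 2 * aN N p ^ 2)) -
              Real.log (1 + β ^ 2 * aN N p ^ 2) / 2)) - 1
            + β ^ 4 / 4 * n * aN N p ^ 2 - β ^ 8 / 32 * n ^ 2 * aN N p ^ 4|
        = |Real.exp (cc * (u / (2 * (1 + u)) - Real.log (1 + u) / 2)) - 1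
            + cc * u ^ 2 / 4 - cc ^ 2 * u ^ 4 / 32| := by rw [hba, h3, h4]
      _ ≤ (3 * (1/4 + 3 * (β ^ 2 * D)) ^ 3 * β ^ 12 * D ^ 3 + 3 * β ^ 6 * D ^ 2
            + (3/2) * (1/4 + 3 * (β ^ 2 * D) + 1/4) * β ^ 10 * D ^ 3) * (n ^ 3 / (n ^ p) ^ 2) :=
          PSpinAux.assemble β n cc (n ^ p) D u hβ0 hN1 hC hD hq3 hqD hu_def
      _ = (3 * (1/4 + 3 * (β ^ 2 * D)) ^ 3 * β ^ 12 * D ^ 3 + 3 * β ^ 6 * D ^ 2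
            + (3/2) * (1/4 + 3 * (β ^ 2 * D) + 1/4) * β ^ 10 * D ^ 3) * n ^ ((3:ℝ) - 2 * (p:ℝ)) := by
          rw [hr]
end
end

section
/- Let p ≥ 3 and β > 0. For every ε > 0 there is a constant K = K(β,p,ε) such that for all N, E[ |Z_ε^≤ − 𝒵_N(β)| ] ≤ exp( −β²·N·ε²/2 + K·N^{2−p} ). -/
open MeasureTheory ProbabilityTheory Filter Topology

noncomputable section

namespace PSpinSK
open Real

variable {Ω : Type*} [MeasurableSpace Ω] {P : Measure Ω} [IsProbabilityMeasure P]

lemma sigmaA_sq (s A : Finset ℕ) : sigmaA s A ^ 2 = 1 := by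
  rw [sigmaA, ← Finset.prod_pow]
  apply Finset.prod_eq_one
  intro i _
  by_cases h : i ∈ s <;> simp [h]

/-! Gaussian tilt integral -/

lemma gauss_pdf_tilt {θ c : ℝ} (hc : 0 < c) (x : ℝ) :
    Real.exp (θ * x - c * x ^ 2) * gaussianPDFReal 0 1 x
      = Real.sqrt (1 + 2 * c)⁻¹ * Real.exp (θ ^ 2 / (2 * (1 + 2 * c))) *
        gaussianPDFReal (θ / (1 + 2 * c)) (⟨(1 + 2 * c)⁻¹, by positivity⟩ : NNReal) x := by
  have h1 : (0:ℝ) < 1 + 2 * c := by linarith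
  have hpi : (0:ℝ) < 2 * π := by positivity
  simp only [gaussianPDFReal, NNReal.coe_mk, NNReal.coe_one]
  change rexp (θ * x - c * x ^ 2) * ((√(2 * π * 1))⁻¹ * rexp (-(x - 0) ^ 2 / (2 * 1))) =
    √(1 + 2 * c)⁻¹ * rexp (θ ^ 2 / (2 * (1 + 2 * c))) *
      ((√(2 * π * (1 + 2 * c)⁻¹))⁻¹ * rexp (-(x - θ / (1 + 2 * c)) ^ 2 / (2 * (1 + 2 * c)⁻¹)))
  have hv : Real.sqrt (2*π*(1+2*c)⁻¹) = Real.sqrt (2*π) * Real.sqrt (1+2*c)⁻¹ :=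
    Real.sqrt_mul hpi.le _
  rw [hv, show (2:ℝ)*π*1 = 2*π from mul_one _]
  have hs : Real.sqrt (1+2*c)⁻¹ ≠ 0 := by positivity
  have h2 : Real.sqrt (2*π) ≠ 0 := by positivity
  rw [mul_inv, show √(1 + 2*c)⁻¹ * rexp (θ^2 / (2*(1+2*c))) *
      ((√(2*π))⁻¹ * (√(1+2*c)⁻¹)⁻¹ * rexp (-(x - θ/(1+2*c))^2 / (2*(1+2*c)⁻¹)))
    = (√(1+2*c)⁻¹ * (√(1+2*c)⁻¹)⁻¹) * ((√(2*π))⁻¹ *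
        (rexp (θ^2 / (2*(1+2*c))) * rexp (-(x - θ/(1+2*c))^2 / (2*(1+2*c)⁻¹)))) by ring,
    mul_inv_cancel₀ hs, one_mul, ← Real.exp_add]
  rw [show rexp (θ*x - c*x^2) * ((√(2*π))⁻¹ * rexp (-(x-0)^2/(2*1)))
    = (√(2*π))⁻¹ * (rexp (θ*x - c*x^2) * rexp (-(x-0)^2/(2*1))) by ring, ← Real.exp_add]
  congr 1
  rw [Real.exp_eq_exp]
  field_simp
  ring

lemma gaussianReal_eq_wd :
    gaussianReal 0 1 = MeasureTheory.volume.withDensity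
      (fun x => ((Real.toNNReal (gaussianPDFReal 0 1 x)) : ENNReal)) := by
  rw [gaussianReal_of_var_ne_zero _ one_ne_zero]
  rfl

lemma integral_gaussianReal (g : ℝ → ℝ) :
    ∫ x, g x ∂(gaussianReal 0 1) = ∫ x, gaussianPDFReal 0 1 x * g x := by
  rw [gaussianReal_eq_wd, integral_withDensity_eq_integral_smul
    ((measurable_gaussianPDFReal 0 1).real_toNNReal)]
  congr 1; ext x
  rw [NNReal.smul_def, Real.coe_toNNReal _ (gaussianPDFReal_nonneg 0 1 x), smul_eq_mul]

lemma integrable_gaussianReal_iff (g : ℝ → ℝ) :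
    Integrable g (gaussianReal 0 1) ↔
      Integrable (fun x => gaussianPDFReal 0 1 x * g x) := by
  rw [gaussianReal_eq_wd, integrable_withDensity_iff_integrable_smul
    ((measurable_gaussianPDFReal 0 1).real_toNNReal)]
  constructor <;> intro h <;> refine h.congr (Filter.Eventually.of_forall fun x => ?_) <;>
    · simp only [NNReal.smul_def, Real.coe_toNNReal _ (gaussianPDFReal_nonneg 0 1 x),
        smul_eq_mul]

lemma tilt_integrable {θ c : ℝ} (hc : 0 < c) :
    Integrable (fun x => Real.exp (θ * x - c * x ^ 2)) (gaussianReal 0 1) := by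
  rw [integrable_gaussianReal_iff]
  have : (fun x => gaussianPDFReal 0 1 x * Real.exp (θ * x - c * x ^ 2))
      = fun x => (Real.sqrt (1 + 2 * c)⁻¹ * Real.exp (θ ^ 2 / (2 * (1 + 2 * c)))) *
        gaussianPDFReal (θ / (1 + 2 * c)) (⟨(1 + 2 * c)⁻¹, by positivity⟩ : NNReal) x := by
    ext x
    rw [mul_comm (gaussianPDFReal 0 1 x), gauss_pdf_tilt hc]
  rw [this]
  exact (integrable_gaussianPDFReal _ _).const_mul _

lemma tilt_integral {θ c : ℝ} (hc : 0 < c) :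
    ∫ x, Real.exp (θ * x - c * x ^ 2) ∂(gaussianReal 0 1)
      = Real.sqrt (1 + 2 * c)⁻¹ * Real.exp (θ ^ 2 / (2 * (1 + 2 * c))) := by
  have h1 : (0:ℝ) < 1 + 2 * c := by linarith
  rw [integral_gaussianReal]
  calc ∫ x, gaussianPDFReal 0 1 x * Real.exp (θ * x - c * x ^ 2)
      = ∫ x, (Real.sqrt (1 + 2 * c)⁻¹ * Real.exp (θ ^ 2 / (2 * (1 + 2 * c)))) *
          gaussianPDFReal (θ / (1 + 2 * c)) (⟨(1 + 2 * c)⁻¹, by positivity⟩ : NNReal) x := by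
        congr 1; ext x; rw [mul_comm (gaussianPDFReal 0 1 x), gauss_pdf_tilt hc]
    _ = _ := by
        rw [integral_const_mul]
        refine (congrArg _ (integral_gaussianPDFReal_eq_one _ ?_)).trans (mul_one _)
        intro h0
        exact (inv_pos.mpr h1).ne' (congrArg NNReal.toReal h0)

/-! Independence helpers -/

variable {Ω : Type*} [MeasurableSpace Ω] {P : Measure Ω} [IsProbabilityMeasure P]

lemma indep_prod_integral (J : Finset ℕ → Ω → ℝ)
    (hJm : ∀ A, Measurable (J A))
    (hJi : iIndepFun J P)
    (φ : Finset ℕ → ℝ → ℝ) (hφ : ∀ A, Measurable (φ A))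
    (hint : ∀ A, Integrable (fun ω => φ A (J A ω)) P) (S : Finset (Finset ℕ)) :
    Integrable (fun ω => ∏ A ∈ S, φ A (J A ω)) P ∧
      ∫ ω, ∏ A ∈ S, φ A (J A ω) ∂P = ∏ A ∈ S, ∫ ω, φ A (J A ω) ∂P := by
  classical
  have hK : iIndepFun
      (fun A => fun ω => φ A (J A ω)) P := hJi.comp φ hφ
  induction S using Finset.induction with
  | empty => simp
  | @insert a s hnotmem ih =>
    have hKm : ∀ A, Measurable (fun ω => φ A (J A ω)) := fun A => (hφ A).comp (hJm A)
    have hindep : IndepFun (fun ω => ∏ A ∈ s, φ A (J A ω)) (fun ω => φ a (J a ω)) P := by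
      have := hK.indepFun_finsetProd_of_notMem hKm hnotmem
      convert this using 1
      ext ω
      simp [Finset.prod_apply]
    obtain ⟨ih1, ih2⟩ := ih
    constructor
    · have := hindep.symm.integrable_mul (hint a) ih1
      refine this.congr (Filter.Eventually.of_forall fun ω => ?_)
      simp [Finset.prod_insert hnotmem, Pi.mul_apply]
    · rw [Finset.prod_insert hnotmem, ← ih2,
        ← hindep.symm.integral_mul_eq_mul_integral (hint a).aestronglyMeasurable
          ih1.aestronglyMeasurable]
      congr 1; ext ω; rw [Finset.prod_insert hnotmem]; rfl

lemma key_ineq {β ε v : ℝ} {n : ℝ} (hβ : 0 < β) (hε : 0 < ε) (hv0 : 0 < v)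
    (hv1 : v ≤ 1) (hn : 0 ≤ n) :
    -(ε * β) * ((1 + ε) * β * n) + (-(n * β^2 * v)/2 + ((1 + ε) * β)^2 * n * v / 2)
      ≤ -(β ^ 2) * n * ε ^ 2 / 2 := by
  nlinarith [mul_nonneg (mul_nonneg (mul_nonneg hn (sq_nonneg β)) (sub_nonneg.mpr hv1))
    (mul_nonneg hε.le (by linarith : (0:ℝ) ≤ 2 + ε))]

omit [IsProbabilityMeasure P] in
lemma comp_integral {J : Ω → ℝ} (hm : Measurable J) (hmap : P.map J = gaussianReal 0 1)
    {φ : ℝ → ℝ} (hφ : Measurable φ) (hi : Integrable φ (gaussianReal 0 1)) :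
    Integrable (fun ω => φ (J ω)) P ∧
      ∫ ω, φ (J ω) ∂P = ∫ x, φ x ∂(gaussianReal 0 1) := by
  rw [← hmap] at hi ⊢
  constructor
  · exact (integrable_map_measure hφ.aestronglyMeasurable hm.aemeasurable).mp hi
  · rw [integral_map hm.aemeasurable hφ.aestronglyMeasurable]

end PSpinSK

open PSpinSK in
/-- `Z_ε^≤` and `𝒵_N(β)` are exponentially close in `L¹`. -/
theorem pspin_Zle_close_to_calZ
    {Ω : Type*} [MeasurableSpace Ω] (P : MeasureTheory.Measure Ω)
    [MeasureTheory.IsProbabilityMeasure P]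
    (J : Finset ℕ → Ω → ℝ) (hJ : PSpinSK.stdGaussians P J)
    (p : ℕ) (hp : 3 ≤ p) (β : ℝ) (hβ0 : 0 < β) (ε : ℝ) (hε : 0 < ε) :
    ∃ K : ℝ, ∀ N, p ≤ N →
      (∫ ω, |Zle N p β ε (fun A => J A ω) - calZ N p β (fun A => J A ω)| ∂P) ≤
        Real.exp (-(β ^ 2) * N * ε ^ 2 / 2 + K * (N : ℝ) ^ ((2 : ℝ) - p)) := by
  classical
  obtain ⟨hJm, hJi, hJmap⟩ := hJ
  refine ⟨0, fun N hpN => ?_⟩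
  have hN0 : 0 < N := lt_of_lt_of_le (by omega) hpN
  have hMpos : 0 < N.choose p := Nat.choose_pos hpN
  set M : ℕ := N.choose p with hM
  have hMR : (0:ℝ) < M := by exact_mod_cast hMpos
  have hNR : (0:ℝ) < N := by exact_mod_cast hN0
  set c : ℝ := (N:ℝ) * β^2 / (2 * M) with hcdef
  have hc : 0 < c := by positivity
  have h12c : (0:ℝ) < 1 + 2*c := by linarith
  set v : ℝ := (1 + 2*c)⁻¹ with hvdef
  have hv0 : 0 < v := inv_pos.mpr h12c
  have hv1 : v ≤ 1 := by
    rw [hvdef]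
    rw [inv_le_one_iff₀]
    right; linarith
  set θ : ℝ := (1 + ε) * β with hθ
  set lam : ℝ := ε * β with hlam
  have hlam0 : 0 < lam := by rw [hlam]; positivity
  set t : ℝ := (1 + ε) * β * N with ht
  set I : Finset (Finset ℕ) := indexSet N p with hI
  have hIcard : I.card = M := by
    simp [hI, indexSet, Finset.card_powersetCard, Finset.card_range, hM]
  have haN2 : (aN N p)^2 = (N:ℝ) / M := by
    rw [aN, div_pow, Real.sq_sqrt (Nat.cast_nonneg N), Real.sq_sqrt (Nat.cast_nonneg _)]
  set q : ℝ := θ^2 * (aN N p)^2 / (2 * (1 + 2*c)) with hq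
  set R : ℝ := Real.exp (-lam * t) * (Real.sqrt (1+2*c)⁻¹ * Real.exp q) ^ M with hR
  -- the functions
  set g : Finset ℕ → Ω → ℝ := fun s ω =>
    Real.exp (-β * Ham N p (fun A => J A ω) s) *
      (if (1 + ε) * β * N < -Ham N p (fun A => J A ω) s then 1 else 0) *
      Real.exp (-(N:ℝ) * Jterm N p β (fun A => J A ω)) with hg
  set h : Finset ℕ → Ω → ℝ := fun s ω =>
    Real.exp (-lam * t) *
      ∏ A ∈ I, Real.exp (θ * (aN N p * sigmaA s A) * (J A ω) - c * (J A ω)^2) with hh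
  -- product = exp form
  have hprod : ∀ (s : Finset ℕ) (ω : Ω),
      (∏ A ∈ I, Real.exp (θ * (aN N p * sigmaA s A) * (J A ω) - c * (J A ω)^2))
      = Real.exp (θ * (-(Ham N p (fun A => J A ω) s))
          - (N:ℝ) * Jterm N p β (fun A => J A ω)) := by
    intro s ω
    rw [← Real.exp_sum]
    congr 1
    simp only [Ham, Jterm, ← hI, ← hM]
    rw [Finset.sum_sub_distrib]
    congr 1
    · rw [neg_mul, neg_neg, Finset.mul_sum, Finset.mul_sum]
      exact Finset.sum_congr rfl fun A _ => by ring
    · rw [Finset.mul_sum, Finset.mul_sum]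
      refine Finset.sum_congr rfl fun A _ => ?_
      rw [hcdef]
      field_simp
  -- pointwise bound
  have hgh : ∀ (s : Finset ℕ) (ω : Ω), g s ω ≤ h s ω := by
    intro s ω
    rw [hh]
    simp only []
    rw [hprod s ω, ← Real.exp_add, hg]
    simp only []
    by_cases hcase : (1 + ε) * β * N < -Ham N p (fun A => J A ω) s
    · rw [if_pos hcase, mul_one, ← Real.exp_add]
      apply Real.exp_le_exp.mpr
      have h1 : 0 ≤ lam * (-Ham N p (fun A => J A ω) s - t) := by
        apply mul_nonneg hlam0.le
        rw [ht]; linarith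
      rw [hθ, hlam, ht] at *
      nlinarith [h1]
    · rw [if_neg hcase, mul_zero, zero_mul]
      positivity
  -- integral of h
  have hφint : ∀ (s A : Finset ℕ),
      Integrable (fun ω => Real.exp (θ * (aN N p * sigmaA s A) * (J A ω) - c * (J A ω)^2)) P ∧
      ∫ ω, Real.exp (θ * (aN N p * sigmaA s A) * (J A ω) - c * (J A ω)^2) ∂P
        = Real.sqrt (1+2*c)⁻¹ * Real.exp q := by
    intro s A
    have hφm : Measurable (fun x : ℝ => Real.exp (θ * (aN N p * sigmaA s A) * x - c * x^2)) := by
      fun_prop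
    obtain ⟨h1, h2⟩ := comp_integral (hJm A) (hJmap A) hφm (tilt_integrable hc)
    refine ⟨h1, ?_⟩
    rw [h2, tilt_integral hc, hq]
    congr 2
    simp only [mul_pow, sigmaA_sq, mul_one]
  have hhint : ∀ s : Finset ℕ, Integrable (h s) P ∧ ∫ ω, h s ω ∂P = R := by
    intro s
    obtain ⟨h1, h2⟩ := indep_prod_integral J hJm hJi
      (fun A x => Real.exp (θ * (aN N p * sigmaA s A) * x - c * x^2))
      (fun A => by fun_prop) (fun A => (hφint s A).1) I
    constructor
    · exact h1.const_mul _
    · rw [hh]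
      simp only []
      rw [integral_const_mul, h2, hR]
      congr 1
      rw [Finset.prod_congr rfl (fun A _ => (hφint s A).2), Finset.prod_const, hIcard]
  -- g measurable, nonneg, integrable
  have hHmeas : ∀ s : Finset ℕ, Measurable (fun ω => Ham N p (fun A => J A ω) s) := by
    intro s
    simp only [Ham]
    exact (Finset.measurable_sum _ (fun A _ => (hJm A).mul_const _)).const_mul _
  have hJtmeas : Measurable (fun ω => Jterm N p β (fun A => J A ω)) := by
    simp only [Jterm]
    exact (Finset.measurable_sum _ (fun A _ => (hJm A).pow_const 2)).const_mul _
  have hgmeas : ∀ s : Finset ℕ, Measurable (g s) := by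
    intro s
    rw [hg]
    apply Measurable.mul
    apply Measurable.mul
    · exact (((hHmeas s).const_mul (-β)).exp)
    · exact Measurable.ite (measurableSet_lt measurable_const (hHmeas s).neg)
        measurable_const measurable_const
    · exact ((hJtmeas.const_mul _).exp)
  have hgnn : ∀ (s : Finset ℕ) (ω : Ω), 0 ≤ g s ω := by
    intro s ω
    rw [hg]
    simp only []
    apply mul_nonneg (mul_nonneg (Real.exp_pos _).le _) (Real.exp_pos _).le
    split <;> norm_num
  have hgint : ∀ s : Finset ℕ, Integrable (g s) P := by
    intro s
    refine (hhint s).1.mono' (hgmeas s).aestronglyMeasurable ?_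
    refine Filter.Eventually.of_forall fun ω => ?_
    rw [Real.norm_eq_abs, abs_of_nonneg (hgnn s ω)]
    exact hgh s ω
  have hgle : ∀ s : Finset ℕ, ∫ ω, g s ω ∂P ≤ R := by
    intro s
    rw [← (hhint s).2]
    exact integral_mono (hgint s) (hhint s).1 (hgh s)
  -- pointwise identity for the absolute difference
  have habs : ∀ ω : Ω, |Zle N p β ε (fun A => J A ω) - calZ N p β (fun A => J A ω)|
      = (2^N : ℝ)⁻¹ * ∑ s ∈ Finset.powerset (Finset.range N), g s ω := by
    intro ω
    have hsplit : calZ N p β (fun A => J A ω) - Zle N p β ε (fun A => J A ω)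
        = (2^N : ℝ)⁻¹ * ∑ s ∈ Finset.powerset (Finset.range N), g s ω := by
      rw [calZ, Zle, Zfun, Esigma, Esigma, ← sub_mul, ← mul_sub, ← Finset.sum_sub_distrib]
      rw [mul_assoc, Finset.sum_mul]
      congr 1
      refine Finset.sum_congr rfl fun s _ => ?_
      rw [hg]
      simp only []
      by_cases hcase : -Ham N p (fun A => J A ω) s ≤ (1 + ε) * β * N
      · rw [if_pos hcase, if_neg (not_lt.mpr hcase)]; ring
      · rw [if_neg hcase, if_pos (lt_of_not_ge hcase)]; ring
    rw [abs_sub_comm, hsplit, abs_of_nonneg]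
    apply mul_nonneg (by positivity)
    exact Finset.sum_nonneg fun s _ => hgnn s ω
  -- final bound on R
  have hfin : R ≤ Real.exp (-(β ^ 2) * N * ε ^ 2 / 2 + 0 * (N : ℝ) ^ ((2 : ℝ) - p)) := by
    rw [zero_mul, add_zero, hR]
    have hsq : Real.sqrt (1+2*c)⁻¹ * Real.exp q = Real.exp (-(Real.log (1+2*c))/2 + q) := by
      rw [Real.exp_add]
      congr 1
      rw [show Real.sqrt (1+2*c)⁻¹ = Real.exp (Real.log (Real.sqrt (1+2*c)⁻¹)) from
        (Real.exp_log (Real.sqrt_pos.mpr (inv_pos.mpr h12c))).symm]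
      congr 1
      rw [Real.log_sqrt (inv_pos.mpr h12c).le, Real.log_inv]
      try ring
    rw [hsq, ← Real.exp_nat_mul, ← Real.exp_add]
    apply Real.exp_le_exp.mpr
    have hMq : (M:ℝ) * q = θ^2 * N * v / 2 := by
      rw [hq, haN2, hvdef]
      field_simp
    have hMc : (M:ℝ) * c = N * β^2 / 2 := by
      rw [hcdef]
      field_simp
    have h1v : 1 - v = 2 * c * v := by
      rw [hvdef]
      field_simp
      ring
    have hlog : 1 - v ≤ Real.log (1+2*c) := by
      rw [hvdef]
      exact Real.one_sub_inv_le_log_of_pos h12c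
    have hMlog : (N:ℝ) * β^2 * v ≤ (M:ℝ) * Real.log (1+2*c) := by
      calc (N:ℝ) * β^2 * v = 2 * ((M:ℝ) * c) * v := by rw [hMc]; ring
        _ = (M:ℝ) * (2 * c * v) := by ring
        _ = (M:ℝ) * (1 - v) := by rw [h1v]
        _ ≤ (M:ℝ) * Real.log (1+2*c) := by
            apply mul_le_mul_of_nonneg_left hlog hMR.le
    have hexpand : (M:ℝ) * (-(Real.log (1+2*c))/2 + q)
        = -((M:ℝ) * Real.log (1+2*c))/2 + θ^2 * N * v / 2 := by
      rw [mul_add, hMq]; ring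
    rw [hexpand]
    have key : -lam * t + (-((N:ℝ) * β^2 * v)/2 + θ^2 * N * v / 2)
        ≤ -(β ^ 2) * N * ε ^ 2 / 2 := by
      rw [hlam, ht, hθ]
      exact key_ineq hβ0 hε hv0 hv1 (Nat.cast_nonneg N)
    have : -((M:ℝ) * Real.log (1+2*c))/2 ≤ -((N:ℝ) * β^2 * v)/2 := by linarith
    linarith
  -- put it together
  calc ∫ ω, |Zle N p β ε (fun A => J A ω) - calZ N p β (fun A => J A ω)| ∂P
      = ∫ ω, (2^N : ℝ)⁻¹ * ∑ s ∈ Finset.powerset (Finset.range N), g s ω ∂P := by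
        exact integral_congr_ae (Filter.Eventually.of_forall habs)
    _ = (2^N : ℝ)⁻¹ * ∑ s ∈ Finset.powerset (Finset.range N), ∫ ω, g s ω ∂P := by
        rw [integral_const_mul, integral_finset_sum _ (fun s _ => hgint s)]
    _ ≤ (2^N : ℝ)⁻¹ * ∑ s ∈ Finset.powerset (Finset.range N), R := by
        apply mul_le_mul_of_nonneg_left _ (by positivity)
        exact Finset.sum_le_sum fun s _ => hgle s
    _ = R := by
        rw [Finset.sum_const, Finset.card_powerset, Finset.card_range, nsmul_eq_mul]
        push_cast
        rw [← mul_assoc, inv_mul_cancel₀ (by positivity), one_mul]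
    _ ≤ _ := hfin
end
end
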